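/- For every positive integer n, the sum over divisors d of n of μ(n/d)·L_d is nonnegative and divisible by n, where L is the Lucas sequence. -/

import Mathlib

def lucas : ℕ → ℕ
  | 0 => 2
  | 1 => 1
  | n + 2 => lucas (n + 1) + lucas n

set_option linter.unusedSectionVars false
set_option linter.unusedVariables false
namespace LucasAux

/-- no two (cyclically) adjacent `true`s -/
def Ok {m : ℕ} (f : ZMod m → Bool) : Prop := ∀ i : ZMod m, (f i && f (i + 1)) = false

instance {m : ℕ} [NeZero m] : DecidablePred (Ok (m := m)) := fun _ => by
  unfold Ok; infer_instance

def okSet (m : ℕ) [NeZero m] : Finset (ZMod m → Bool) :=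
  Finset.univ.filter Ok

/-- `f` is periodic with period `d` (cast into `ZMod m`). -/
def Per {m : ℕ} (f : ZMod m → Bool) (d : ℕ) : Prop := ∀ x, f (x + (d : ZMod m)) = f x

instance {m : ℕ} [NeZero m] (f : ZMod m → Bool) : DecidablePred (Per f) := fun _ => by
  unfold Per; infer_instance

def primSet (m : ℕ) [NeZero m] : Finset (ZMod m → Bool) :=
  (okSet m).filter (fun f => ∀ d ∈ m.properDivisors, ¬ Per f d)

def cnt : ℕ → ℕ
  | 0 => 0
  | (k+1) => (okSet (k+1)).card

def P : ℕ → ℕ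
  | 0 => 0
  | (k+1) => (primSet (k+1)).card

/-- the stabilizer subgroup of shifts fixing f -/
def stab {m : ℕ} (f : ZMod m → Bool) : AddSubgroup (ZMod m) where
  carrier := {z | ∀ x, f (x + z) = f x}
  zero_mem' := by intro x; simp
  add_mem' := by
    intro a b ha hb x
    rw [← add_assoc]
    rw [hb (x + a)]  -- wrong order? f (x + (a+b)) = f (x + a + b)
    exact ha x
  neg_mem' := by
    intro a ha x
    have := ha (x + -a)
    simp only [neg_add_cancel_right] at this
    exact this.symm

lemma per_iff_stab {m : ℕ} (f : ZMod m → Bool) (d : ℕ) :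
    Per f d ↔ (d : ZMod m) ∈ stab f := Iff.rfl

lemma per_gcd {m : ℕ} (f : ZMod m → Bool) {a b : ℕ} (ha : Per f a) (hb : Per f b) :
    Per f (Nat.gcd a b) := by
  rw [per_iff_stab] at *
  have h : ((Nat.gcd a b : ℤ) : ZMod m) = Nat.gcdA a b • (a : ZMod m) + Nat.gcdB a b • (b : ZMod m) := by
    rw [Nat.gcd_eq_gcd_ab]
    push_cast
    rw [zsmul_eq_mul, zsmul_eq_mul]
    ring
  have : ((Nat.gcd a b : ℕ) : ZMod m) = ((Nat.gcd a b : ℤ) : ZMod m) := by push_cast; ring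
  rw [this, h]
  exact AddSubgroup.add_mem _ (AddSubgroup.zsmul_mem _ ha _) (AddSubgroup.zsmul_mem _ hb _)

lemma per_self {m : ℕ} (f : ZMod m → Bool) : Per f m := by
  intro x; rw [ZMod.natCast_self, add_zero]

lemma per_of_dvd {m : ℕ} (f : ZMod m → Bool) {d e : ℕ} (h : d ∣ e) (hd : Per f d) :
    Per f e := by
  obtain ⟨c, rfl⟩ := h
  intro x
  push_cast
  induction c with
  | zero => simp
  | succ c ih =>
    have : (d : ZMod m) * (c + 1 : ℕ) = (d : ZMod m) * c + d := by push_cast; ring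
    rw [this, ← add_assoc]
    rw [hd (x + (d:ZMod m) * c)]
    simpa using ih

/-- descend a periodic function to a smaller `ZMod` -/
lemma per_factor {m d : ℕ} [NeZero m] [NeZero d] (hdm : d ∣ m) (f : ZMod m → Bool)
    (hf : Per f d) : ∃ g : ZMod d → Bool, f = g ∘ ZMod.castHom hdm (ZMod d) := by
  refine ⟨fun y => f ((y.val : ZMod m)), ?_⟩
  funext x
  simp only [Function.comp_apply]
  have hcast : (ZMod.castHom hdm (ZMod d)) x = ((x.val : ℕ) : ZMod d) := by
    rw [ZMod.castHom_apply, ← ZMod.natCast_val]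
  rw [hcast, ZMod.val_natCast]
  -- goal : f x = f ((x.val % d : ℕ) : ZMod m)
  have h1 : Per f (d * (x.val / d)) := per_of_dvd f ⟨_, rfl⟩ hf
  have h2 := h1 ((x.val % d : ℕ) : ZMod m)
  have h3 : ((x.val % d : ℕ) : ZMod m) + ((d * (x.val / d) : ℕ) : ZMod m) = x := by
    have : (x.val % d) + d * (x.val / d) = x.val := Nat.mod_add_div _ _
    rw [← Nat.cast_add, this, ZMod.natCast_val, ZMod.cast_id]
  rw [h3] at h2
  exact h2


section Transfer
variable {m d : ℕ} [NeZero m] [NeZero d] (hdm : d ∣ m)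

lemma cast_surj : Function.Surjective (ZMod.castHom hdm (ZMod d)) := by
  intro y
  refine ⟨((y.val : ℕ) : ZMod m), ?_⟩
  rw [map_natCast, ZMod.natCast_val, ZMod.cast_id]

lemma per_pullback (g : ZMod d → Bool) : Per (g ∘ ZMod.castHom hdm (ZMod d)) d := by
  intro x
  simp only [Function.comp_apply, map_add, map_natCast, ZMod.natCast_self, add_zero]

lemma ok_pullback (g : ZMod d → Bool) :
    Ok (g ∘ ZMod.castHom hdm (ZMod d)) ↔ Ok g := by
  constructor
  · intro h i
    obtain ⟨x, rfl⟩ := cast_surj hdm i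
    have := h x
    simp only [Function.comp_apply, map_add, map_one] at this
    exact this
  · intro h x
    have := h (ZMod.castHom hdm (ZMod d) x)
    simp only [Function.comp_apply, map_add, map_one]
    exact this

lemma pullback_inj : Function.Injective
    (fun g : ZMod d → Bool => g ∘ ZMod.castHom hdm (ZMod d)) := by
  intro g g' h
  funext y
  obtain ⟨x, rfl⟩ := cast_surj hdm y
  exact congrFun h x

/-- periods descend along the pullback -/
lemma per_descend (g : ZMod d → Bool) (e : ℕ) (he : Per (g ∘ ZMod.castHom hdm (ZMod d)) e) :
    Per g e := by
  intro y
  obtain ⟨x, rfl⟩ := cast_surj hdm y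
  have := he x
  simp only [Function.comp_apply, map_add, map_natCast] at this
  exact this

end Transfer

section Decomp
variable {m : ℕ} [NeZero m]

/-- minimal period of `f`, as an element of `m.divisors` -/
def minPer (f : ZMod m → Bool) : ℕ :=
  ((m.divisors).filter (fun d => Per f d)).min' (by
    refine ⟨m, Finset.mem_filter.2 ⟨Nat.mem_divisors_self _ (NeZero.ne m), per_self f⟩⟩)

lemma minPer_mem (f : ZMod m → Bool) :
    minPer f ∈ (m.divisors).filter (fun d => Per f d) := Finset.min'_mem _ _

lemma minPer_dvd (f : ZMod m → Bool) : minPer f ∣ m :=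
  (Nat.mem_divisors.1 (Finset.mem_filter.1 (minPer_mem f)).1).1

lemma minPer_per (f : ZMod m → Bool) : Per f (minPer f) :=
  (Finset.mem_filter.1 (minPer_mem f)).2

lemma minPer_le (f : ZMod m → Bool) {d : ℕ} (hd : d ∣ m) (hd0 : d ≠ 0) (h : Per f d) :
    minPer f ≤ d :=
  Finset.min'_le _ _ (Finset.mem_filter.2 ⟨Nat.mem_divisors.2 ⟨hd, NeZero.ne m⟩, h⟩)

lemma minPer_ne_zero (f : ZMod m → Bool) : minPer f ≠ 0 :=
  Nat.pos_of_mem_divisors ((Finset.mem_filter.1 (minPer_mem f)).1) |>.ne'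

/-- minPer divides every period which divides m -/
lemma minPer_dvd_per (f : ZMod m → Bool) {d : ℕ} (hd : d ∣ m) (hd0 : d ≠ 0) (h : Per f d) :
    minPer f ∣ d := by
  have hg : Per f (Nat.gcd (minPer f) d) := per_gcd f (minPer_per f) h
  have hgdvd : Nat.gcd (minPer f) d ∣ m := (Nat.gcd_dvd_right _ d).trans hd
  have hg0 : Nat.gcd (minPer f) d ≠ 0 := by
    have := minPer_ne_zero f
    simp [Nat.gcd_eq_zero_iff]
    omega
  have hle : minPer f ≤ Nat.gcd (minPer f) d := minPer_le f hgdvd hg0 hg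
  have hle' : Nat.gcd (minPer f) d ≤ minPer f :=
    Nat.le_of_dvd (Nat.pos_of_ne_zero (minPer_ne_zero f)) (Nat.gcd_dvd_left _ _)
  have : Nat.gcd (minPer f) d = minPer f := le_antisymm hle' hle
  rw [← this]
  exact Nat.gcd_dvd_right _ _


lemma per_pullback' {d : ℕ} [NeZero d] (hdm : d ∣ m) (g : ZMod d → Bool) {e : ℕ}
    (he : Per g e) : Per (g ∘ ZMod.castHom hdm (ZMod d)) e := by
  intro x
  simp only [Function.comp_apply, map_add, map_natCast]
  exact he _

lemma P_eq (d : ℕ) [NeZero d] : P d = (primSet d).card := by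
  obtain ⟨k, rfl⟩ := Nat.exists_eq_succ_of_ne_zero (NeZero.ne d)
  rfl

lemma fiber_card {d : ℕ} (hd : d ∈ m.divisors) :
    ((okSet m).filter (fun f => minPer f = d)).card = P d := by
  have hd0 : d ≠ 0 := (Nat.pos_of_mem_divisors hd).ne'
  haveI : NeZero d := ⟨hd0⟩
  have hdm : d ∣ m := (Nat.mem_divisors.1 hd).1
  rw [P_eq d]
  symm
  apply Finset.card_bij (fun g _ => g ∘ ZMod.castHom hdm (ZMod d))
  · -- maps into fiber
    intro g hg
    simp only [primSet, Finset.mem_filter, okSet, Finset.mem_univ, true_and] at hg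
    obtain ⟨hok, hprim⟩ := hg
    have hfok : Ok (g ∘ ZMod.castHom hdm (ZMod d)) := (ok_pullback hdm g).2 hok
    refine Finset.mem_filter.2 ⟨Finset.mem_filter.2 ⟨Finset.mem_univ _, hfok⟩, ?_⟩
    -- minPer = d
    have hper : Per (g ∘ ZMod.castHom hdm (ZMod d)) d := per_pullback hdm g
    have hdvd : minPer (g ∘ ZMod.castHom hdm (ZMod d)) ∣ d := minPer_dvd_per _ hdm hd0 hper
    by_contra hne
    have hlt : minPer (g ∘ ZMod.castHom hdm (ZMod d)) < d :=
      lt_of_le_of_ne (Nat.le_of_dvd (Nat.pos_of_ne_zero hd0) hdvd) hne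
    have hmem : minPer (g ∘ ZMod.castHom hdm (ZMod d)) ∈ d.properDivisors :=
      Nat.mem_properDivisors.2 ⟨hdvd, hlt⟩
    exact hprim _ hmem (per_descend hdm g _ (minPer_per _))
  · -- injective
    intro g₁ h₁ g₂ h₂ h
    exact pullback_inj hdm h
  · -- surjective
    intro f hf
    simp only [Finset.mem_filter, okSet, Finset.mem_univ, true_and] at hf
    obtain ⟨hok, hmin⟩ := hf
    have hper : Per f d := hmin ▸ minPer_per f
    obtain ⟨g, rfl⟩ := per_factor hdm f hper
    refine ⟨g, ?_, rfl⟩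
    simp only [primSet, Finset.mem_filter, okSet, Finset.mem_univ, true_and]
    refine ⟨(ok_pullback hdm g).1 hok, ?_⟩
    intro e he hpe
    obtain ⟨hed, helt⟩ := Nat.mem_properDivisors.1 he
    have he0 : e ≠ 0 := (Nat.pos_of_mem_divisors (Nat.mem_divisors.2
      ⟨hed, hd0⟩)).ne'
    have : Per (g ∘ ZMod.castHom hdm (ZMod d)) e := per_pullback' hdm g hpe
    have hle := minPer_le (g ∘ ZMod.castHom hdm (ZMod d)) (hed.trans hdm) he0 this
    omega

lemma cnt_eq_sum_P : (okSet m).card = ∑ d ∈ m.divisors, P d := by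
  rw [Finset.card_eq_sum_card_fiberwise (f := minPer) (t := m.divisors)
    (fun f _ => (Finset.mem_filter.1 (minPer_mem f)).1)]
  exact Finset.sum_congr rfl (fun d hd => fiber_card hd)

end Decomp

section Orbits
variable {m : ℕ} [NeZero m]

def shift (c : ZMod m) (f : ZMod m → Bool) : ZMod m → Bool := fun x => f (x + c)

lemma shift_shift (c c' : ZMod m) (f : ZMod m → Bool) :
    shift c' (shift c f) = shift (c + c') f := by
  funext x; simp only [shift]; ring_nf

lemma shift_mem_primSet {c : ZMod m} {f : ZMod m → Bool} (hf : f ∈ primSet m) :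
    shift c f ∈ primSet m := by
  simp only [primSet, Finset.mem_filter, okSet, Finset.mem_univ, true_and] at hf ⊢
  obtain ⟨hok, hprim⟩ := hf
  constructor
  · intro i
    have := hok (i + c)
    simp only [shift]
    have h1 : i + 1 + c = i + c + 1 := by ring
    rw [h1]
    exact this
  · intro d hd hpd
    refine hprim d hd ?_
    intro x
    have := hpd (x - c)
    simp only [shift] at this
    have h1 : x - c + (d : ZMod m) + c = x + d := by ring
    have h2 : x - c + c = x := by ring
    rw [h1, h2] at this
    exact this

def orbitF (f : ZMod m → Bool) : Finset (ZMod m → Bool) :=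
  Finset.univ.image (fun c => shift c f)

lemma orbitF_shift (c : ZMod m) (f : ZMod m → Bool) : orbitF (shift c f) = orbitF f := by
  unfold orbitF
  apply Finset.ext
  intro g
  simp only [Finset.mem_image, Finset.mem_univ, true_and]
  constructor
  · rintro ⟨c', rfl⟩
    exact ⟨c + c', (shift_shift c c' f).symm⟩
  · rintro ⟨c', rfl⟩
    exact ⟨c' - c, by rw [shift_shift, add_sub_cancel]⟩

lemma shift_inj_of_prim {f : ZMod m → Bool} (hf : f ∈ primSet m) :
    Function.Injective (fun c => shift c f) := by
  intro c c' h
  by_contra hne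
  set z := c - c' with hz
  have hz0 : z ≠ 0 := sub_ne_zero.2 hne
  have hstab : ∀ x, f (x + z) = f x := by
    intro x
    have := congrFun h (x - c')
    simp only [shift] at this
    have h1 : x - c' + c = x + z := by rw [hz]; ring
    have h2 : x - c' + c' = x := by ring
    rw [h1, h2] at this
    exact this
  have hval : (z.val : ZMod m) = z := ZMod.natCast_rightInverse z
  have hper : Per f z.val := by intro x; rw [hval]; exact hstab x
  have hv0 : z.val ≠ 0 := fun h0 => hz0 (by rw [h0, Nat.cast_zero] at hval; exact hval.symm)
  have hvlt : z.val < m := ZMod.val_lt z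
  have hper2 : Per f (Nat.gcd z.val m) := per_gcd f hper (per_self f)
  simp only [primSet, Finset.mem_filter] at hf
  refine hf.2 _ ?_ hper2
  refine Nat.mem_properDivisors.2 ⟨Nat.gcd_dvd_right _ _, ?_⟩
  calc Nat.gcd z.val m ≤ z.val := Nat.le_of_dvd (Nat.pos_of_ne_zero hv0) (Nat.gcd_dvd_left _ _)
    _ < m := hvlt

lemma m_dvd_P : m ∣ P m := by
  rw [P_eq m]
  rw [Finset.card_eq_sum_card_fiberwise (f := orbitF) (t := (primSet m).image orbitF)
    (fun f hf => Finset.mem_image_of_mem _ hf)]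
  have : ∀ q ∈ (primSet m).image orbitF,
      ((primSet m).filter (fun g => orbitF g = q)).card = m := by
    intro q hq
    obtain ⟨f₀, hf₀, rfl⟩ := Finset.mem_image.1 hq
    have hfiber : (primSet m).filter (fun g => orbitF g = orbitF f₀) = orbitF f₀ := by
      apply Finset.ext
      intro g
      simp only [Finset.mem_filter]
      constructor
      · rintro ⟨hg, horb⟩
        rw [← horb]
        exact Finset.mem_image.2 ⟨0, Finset.mem_univ _, by funext x; simp [shift]⟩
      · intro hg
        obtain ⟨c, _, rfl⟩ := Finset.mem_image.1 hg
        exact ⟨shift_mem_primSet hf₀, orbitF_shift c f₀⟩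
    rw [hfiber, orbitF,
      Finset.card_image_of_injective _ (shift_inj_of_prim hf₀), Finset.card_univ,
      ZMod.card]
  rw [Finset.sum_congr rfl this, Finset.sum_const, smul_eq_mul]
  exact Dvd.intro _ (mul_comm _ _)

end Orbits

lemma ok_iff_nat {m : ℕ} [NeZero m] (f : ZMod m → Bool) :
    Ok f ↔ ∀ a : ℕ, a < m → (f ((a : ℕ) : ZMod m) && f ((a+1 : ℕ) : ZMod m)) = false := by
  constructor
  · intro H a _
    have := H ((a : ℕ) : ZMod m)
    rwa [show ((a : ℕ) : ZMod m) + 1 = ((a+1 : ℕ) : ZMod m) by push_cast; ring] at this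
  · intro H i
    have := H i.val (ZMod.val_lt i)
    rwa [show ((i.val : ℕ) : ZMod m) = i from ZMod.natCast_rightInverse i,
      show ((i.val + 1 : ℕ) : ZMod m) = i + 1 by
        push_cast
        rw [show ((i.val : ℕ) : ZMod m) = i from ZMod.natCast_rightInverse i]] at this

lemma val_cast_lt {m a : ℕ} [NeZero m] (h : a < m) : ((a : ZMod m)).val = a :=
  ZMod.val_cast_of_lt h



def LinOk {j : ℕ} (t : Fin j → Bool) : Prop :=
  ∀ a : Fin j, ∀ h : a.val + 1 < j, (t a && t ⟨a.val + 1, h⟩) = false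

instance {j : ℕ} : DecidablePred (LinOk (j := j)) := fun _ => by
  unfold LinOk; infer_instance

lemma linOk_iff {j : ℕ} (t : Fin j → Bool) :
    LinOk t ↔ ∀ a : ℕ, ∀ h : a + 1 < j, (t ⟨a, Nat.lt_of_succ_lt h⟩ && t ⟨a+1, h⟩) = false := by
  constructor
  · intro H a h
    exact H ⟨a, Nat.lt_of_succ_lt h⟩ h
  · intro H i hi
    have := H i.val hi
    rwa [Fin.eta] at this

/-- abbreviation for cons on Bool tuples -/
abbrev bcons {j : ℕ} (b : Bool) (t : Fin j → Bool) : Fin (j+1) → Bool :=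
  Fin.cons (α := fun _ => Bool) b t

lemma linOk_cons_false {j : ℕ} (t : Fin j → Bool) :
    LinOk (bcons false t) ↔ LinOk t := by
  rw [linOk_iff, linOk_iff]
  constructor
  · intro H a h
    have := H (a+1) (by omega)
    exact this
  · intro H a h
    match a with
    | 0 => show (false && _) = false; simp
    | (a+1) =>
      show (t ⟨a, by omega⟩ && t ⟨a+1, by omega⟩) = false
      exact H a (by omega)

lemma linOk_cons_true {j : ℕ} (t : Fin (j+1) → Bool) :
    LinOk (bcons true t) ↔ (t ⟨0, by omega⟩ = false ∧ LinOk t) := by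
  rw [linOk_iff, linOk_iff]
  constructor
  · intro H
    refine ⟨?_, fun a h => H (a+1) (by omega)⟩
    have := H 0 (by omega)
    revert this
    show (true && t ⟨0, _⟩) = false → _
    simp
  · rintro ⟨h0, H⟩ a h
    match a with
    | 0 =>
      show (true && t ⟨0, by omega⟩) = false
      rw [Bool.true_and]
      exact h0
    | (a+1) =>
      show (t ⟨a, by omega⟩ && t ⟨a+1, by omega⟩) = false
      exact H a (by omega)

def linS (j : ℕ) : Finset (Fin j → Bool) := Finset.univ.filter LinOk

def lin (j : ℕ) : ℕ := (linS j).card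

lemma lin_zero : lin 0 = 1 := by decide
lemma lin_one : lin 1 = 2 := by decide

lemma mem_linS {j : ℕ} (t : Fin j → Bool) : t ∈ linS j ↔ LinOk t := by
  simp [linS]

lemma card_cons_image {j : ℕ} (b : Bool) (s : Finset (Fin (j+1) → Bool)) :
    ((linS (j+2)).filter (fun g => g ⟨0, by omega⟩ = b)).card
      = (((linS (j+2)).filter (fun g => g ⟨0, by omega⟩ = b))).card := rfl

lemma filter_false_card (j : ℕ) :
    ((linS (j+2)).filter (fun g => g ⟨0, by omega⟩ = false)).card = lin (j+1) := by
  rw [lin]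
  symm
  apply Finset.card_bij (fun t _ => bcons false t)
  · intro t ht
    rw [mem_linS] at ht
    refine Finset.mem_filter.2 ⟨(mem_linS _).2 ((linOk_cons_false t).2 ht), rfl⟩
  · intro t₁ h₁ t₂ h₂ h
    funext i
    have := congrFun h ⟨i.val + 1, by omega⟩
    rwa [show (bcons false t₁) ⟨i.val+1, by omega⟩ = t₁ ⟨i.val, i.isLt⟩ from rfl,
      show (bcons false t₂) ⟨i.val+1, by omega⟩ = t₂ ⟨i.val, i.isLt⟩ from rfl]
      at this
  · intro g hg
    obtain ⟨hlin, h0⟩ := Finset.mem_filter.1 hg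
    rw [mem_linS] at hlin
    refine ⟨fun i => g ⟨i.val + 1, by omega⟩, ?_, ?_⟩
    · rw [mem_linS, linOk_iff]
      intro a h
      show (g ⟨a+1, by omega⟩ && g ⟨a+2, by omega⟩) = false
      exact (linOk_iff g).1 hlin (a+1) (by omega)

    · funext x
      match x with
      | ⟨0, _⟩ => exact h0.symm
      | ⟨a+1, h⟩ => rfl

lemma filter_true_card (j : ℕ) :
    ((linS (j+2)).filter (fun g => g ⟨0, by omega⟩ = true)).card = lin j := by
  rw [lin]
  symm
  apply Finset.card_bij (fun t _ => bcons true (bcons false t))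
  · intro t ht
    rw [mem_linS] at ht
    refine Finset.mem_filter.2 ⟨(mem_linS _).2 ?_, rfl⟩
    rw [linOk_cons_true]
    refine ⟨rfl, ?_⟩
    exact (linOk_cons_false t).2 ht
  · intro t₁ h₁ t₂ h₂ h
    funext i
    have := congrFun h ⟨i.val + 2, by omega⟩
    rwa [show (bcons true (bcons false t₁)) ⟨i.val+2, by omega⟩ = t₁ ⟨i.val, i.isLt⟩ from rfl,
      show (bcons true (bcons false t₂)) ⟨i.val+2, by omega⟩ = t₂ ⟨i.val, i.isLt⟩ from rfl]
      at this
  · intro g hg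
    obtain ⟨hlin, h0⟩ := Finset.mem_filter.1 hg
    rw [mem_linS] at hlin
    have h1 : g ⟨1, by omega⟩ = false := by
      have := (linOk_iff g).1 hlin 0 (by omega)
      rw [h0] at this
      simpa using this
    refine ⟨fun i => g ⟨i.val + 2, by omega⟩, ?_, ?_⟩
    · rw [mem_linS, linOk_iff]
      intro a h
      show (g ⟨a+2, by omega⟩ && g ⟨a+3, by omega⟩) = false
      exact (linOk_iff g).1 hlin (a+2) (by omega)
    · funext x
      match x with
      | ⟨0, _⟩ => exact h0.symm
      | ⟨1, _⟩ => exact h1.symm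
      | ⟨a+2, h⟩ => rfl

lemma lin_rec (j : ℕ) : lin (j+2) = lin (j+1) + lin j := by
  classical
  have h := Finset.card_filter_add_card_filter_not
    (s := linS (j+2)) (p := fun g => g ⟨0, Nat.succ_pos _⟩ = false)
  simp only [Bool.not_eq_false] at h
  rw [filter_false_card, filter_true_card] at h
  show (linS (j+2)).card = lin (j+1) + lin j
  omega

lemma lin_eq_fib (j : ℕ) : lin j = Nat.fib (j+2) := by
  induction j using Nat.strong_induction_on with
  | _ j ih =>
    match j with
    | 0 => simpa using lin_zero
    | 1 => rw [lin_one]; rfl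
    | (k+2) =>
      rw [lin_rec k, ih (k+1) (by omega), ih k (by omega), Nat.fib_add_two (n := k+2)]
      show Nat.fib (k+3) + Nat.fib (k+2) = Nat.fib (k+2) + Nat.fib (k+3)
      exact Nat.add_comm _ _





lemma cnt_false (k : ℕ) :
    ((okSet (k+3)).filter (fun f => f 0 = false)).card
      = (Finset.univ.filter (LinOk (j := k+2))).card := by
  apply Finset.card_bij (fun f _ => (fun i : Fin (k+2) => f ((i.val + 1 : ℕ) : ZMod (k+3))))
  · intro f hf
    obtain ⟨hok, h0⟩ := Finset.mem_filter.1 hf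
    rw [okSet, Finset.mem_filter] at hok
    have hok' := (ok_iff_nat f).1 hok.2
    refine Finset.mem_filter.2 ⟨Finset.mem_univ _, ?_⟩
    intro a h
    exact hok' (a.val + 1) (by omega)
  · intro f₁ h₁ f₂ h₂ h
    obtain ⟨hok₁, h01⟩ := Finset.mem_filter.1 h₁
    obtain ⟨hok₂, h02⟩ := Finset.mem_filter.1 h₂
    funext x
    have hx : ((x.val : ℕ) : ZMod (k+3)) = x := ZMod.natCast_rightInverse x
    rcases Nat.eq_zero_or_pos x.val with hz | hpos
    · have : x = 0 := by rw [← hx, hz]; simp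
      rw [this, h01, h02]
    · obtain ⟨a, ha⟩ : ∃ a, x.val = a + 1 := ⟨x.val - 1, by omega⟩
      have halt : a < k + 2 := by have := ZMod.val_lt x; omega
      have := congrFun h ⟨a, halt⟩
      simp only at this
      rwa [show ((a + 1 : ℕ) : ZMod (k+3)) = x by rw [← hx, ha]] at this
  · intro t ht
    have htlin : LinOk t := (Finset.mem_filter.1 ht).2
    classical
    set F : ZMod (k+3) → Bool :=
      fun x => if x.val = 0 then false else t ⟨x.val - 1, by have := ZMod.val_lt x; omega⟩
      with hF
    have hev : ∀ b : ℕ, ∀ hb : b < k+3,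
        F ((b : ℕ) : ZMod (k+3)) = (if b = 0 then false else t ⟨b - 1, by omega⟩) := by
      intro b hb
      have hv : ((b : ℕ) : ZMod (k+3)).val = b := val_cast_lt hb
      rw [hF]
      simp only [hv]
      split_ifs with hcond
      · rfl
      · exact congrArg t (Fin.ext (show ((b : ℕ) : ZMod (k+3)).val - 1 = b - 1 from by rw [hv]))
    refine ⟨F, ?_, ?_⟩
    · refine Finset.mem_filter.2 ⟨?_, ?_⟩
      · rw [okSet, Finset.mem_filter]
        refine ⟨Finset.mem_univ _, (ok_iff_nat _).2 ?_⟩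
        intro a ha
        rw [hev a ha]
        by_cases h0 : a = 0
        · simp [h0]
        · by_cases hlast : a = k+2
          · have h1 : ((a+1 : ℕ) : ZMod (k+3)) = 0 := by
              rw [hlast]
              exact ZMod.natCast_self (k+3)
            have h2 : F 0 = false := by rw [hF]; simp
            rw [h1, h2, Bool.and_false]
          · have ha1 : a + 1 < k + 3 := by omega
            rw [hev (a+1) ha1, if_neg h0, if_neg (by omega)]
            have hstep := htlin ⟨a - 1, by omega⟩ (by omega : a - 1 + 1 < k + 2)
            have hfin : (⟨a + 1 - 1, by omega⟩ : Fin (k+2)) = ⟨a - 1 + 1, by omega⟩ :=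
              Fin.ext (show a + 1 - 1 = a - 1 + 1 by omega)
            rw [hfin]
            exact hstep
      · show F 0 = false
        rw [hF]
        simp
    · funext i
      rw [hev (i.val+1) (by omega), if_neg (by omega)]
      simp

lemma pinned (k : ℕ) (f : ZMod (k+3) → Bool) (hok : Ok f) (h0 : f 0 = true) :
    f ((1 : ℕ) : ZMod (k+3)) = false ∧ f ((k+2 : ℕ) : ZMod (k+3)) = false := by
  have H := (ok_iff_nat f).1 hok
  constructor
  · have := H 0 (by omega)
    rw [show ((0:ℕ) : ZMod (k+3)) = 0 by norm_num, h0, Bool.true_and] at this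
    rwa [show ((0+1 : ℕ) : ZMod (k+3)) = ((1:ℕ) : ZMod (k+3)) from rfl] at this
  · have := H (k+2) (by omega)
    rw [show ((k+2+1 : ℕ) : ZMod (k+3)) = 0 from ZMod.natCast_self (k+3), h0,
      Bool.and_true] at this
    exact this

lemma cnt_true (k : ℕ) :
    ((okSet (k+3)).filter (fun f => f 0 = true)).card
      = (Finset.univ.filter (LinOk (j := k))).card := by
  apply Finset.card_bij (fun f _ => (fun i : Fin k => f ((i.val + 2 : ℕ) : ZMod (k+3))))
  · intro f hf
    obtain ⟨hok, h0⟩ := Finset.mem_filter.1 hf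
    rw [okSet, Finset.mem_filter] at hok
    have hok' := (ok_iff_nat f).1 hok.2
    refine Finset.mem_filter.2 ⟨Finset.mem_univ _, ?_⟩
    intro a h
    exact hok' (a.val + 2) (by omega)
  · intro f₁ h₁ f₂ h₂ h
    obtain ⟨hok₁, h01⟩ := Finset.mem_filter.1 h₁
    obtain ⟨hok₂, h02⟩ := Finset.mem_filter.1 h₂
    rw [okSet, Finset.mem_filter] at hok₁ hok₂
    obtain ⟨p11, p12⟩ := pinned k f₁ hok₁.2 h01
    obtain ⟨p21, p22⟩ := pinned k f₂ hok₂.2 h02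
    funext x
    have hx : ((x.val : ℕ) : ZMod (k+3)) = x := ZMod.natCast_rightInverse x
    have hxlt := ZMod.val_lt x
    rcases Nat.eq_zero_or_pos x.val with hz | hpos
    · have : x = 0 := by rw [← hx, hz]; simp
      rw [this, h01, h02]
    · by_cases h1 : x.val = 1
      · have : x = ((1:ℕ) : ZMod (k+3)) := by rw [← hx, h1]
        rw [this, p11, p21]
      · by_cases h2 : x.val = k + 2
        · have : x = ((k+2 : ℕ) : ZMod (k+3)) := by rw [← hx, h2]
          rw [this, p12, p22]
        · obtain ⟨a, ha⟩ : ∃ a, x.val = a + 2 := ⟨x.val - 2, by omega⟩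
          have halt : a < k := by omega
          have := congrFun h ⟨a, halt⟩
          simp only at this
          rwa [show ((a + 2 : ℕ) : ZMod (k+3)) = x by rw [← hx, ha]] at this
  · intro t ht
    have htlin : LinOk t := (Finset.mem_filter.1 ht).2
    classical
    set F : ZMod (k+3) → Bool :=
      fun x => if h0 : x.val = 0 then true else if h1 : x.val = 1 then false
        else if h2 : x.val = k+2 then false
        else t ⟨x.val - 2, by have := ZMod.val_lt x; omega⟩
      with hF
    have hev : ∀ b : ℕ, ∀ hb : b < k+2,
        F ((b : ℕ) : ZMod (k+3)) = (if hb0 : b = 0 then true else if hb1 : b = 1 then false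
          else t ⟨b - 2, by omega⟩) := by
      intro b hb
      have hv : ((b : ℕ) : ZMod (k+3)).val = b := val_cast_lt (by omega)
      rw [hF]
      simp only [hv]
      split_ifs with hb0 hb1 hb2
      · rfl
      · rfl
      · omega
      · exact congrArg t (Fin.ext (show ((b:ℕ) : ZMod (k+3)).val - 2 = b - 2 from by rw [hv]))
    have hlastv : F ((k+2 : ℕ) : ZMod (k+3)) = false := by
      have hv : ((k+2 : ℕ) : ZMod (k+3)).val = k+2 := val_cast_lt (by omega)
      rw [hF]
      simp only [hv]
      simp
    have hzerov : F 0 = true := by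
      rw [hF]
      simp
    refine ⟨F, ?_, ?_⟩
    · refine Finset.mem_filter.2 ⟨?_, ?_⟩
      · rw [okSet, Finset.mem_filter]
        refine ⟨Finset.mem_univ _, (ok_iff_nat _).2 ?_⟩
        intro a ha
        by_cases h0 : a = 0
        · subst h0
          rw [hev 0 (by omega), dif_pos rfl,
            show ((0+1 : ℕ) : ZMod (k+3)) = ((1:ℕ) : ZMod (k+3)) from rfl,
            hev 1 (by omega), dif_neg (by omega), dif_pos rfl, Bool.and_false]
        · by_cases h1 : a = 1
          · subst h1
            rw [hev 1 (by omega), dif_neg (by omega), dif_pos rfl, Bool.false_and]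
          · by_cases hlast : a = k + 2
            · subst hlast
              rw [hlastv, Bool.false_and]
            · by_cases hpre : a = k + 1
              · subst hpre
                rw [show ((k+1+1 : ℕ) : ZMod (k+3)) = ((k+2 : ℕ) : ZMod (k+3)) from rfl,
                  hlastv, Bool.and_false]
              · have ha2 : 2 ≤ a := by omega
                have hak : a < k + 1 := by omega
                rw [hev a (by omega), dif_neg h0, dif_neg h1,
                  hev (a+1) (by omega), dif_neg (by omega), dif_neg (by omega)]
                have hstep := htlin ⟨a - 2, by omega⟩ (by omega : a - 2 + 1 < k)
                have hfin : (⟨a + 1 - 2, by omega⟩ : Fin k) = ⟨a - 2 + 1, by omega⟩ :=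
                  Fin.ext (show a + 1 - 2 = a - 2 + 1 by omega)
                rw [hfin]
                exact hstep
      · exact hzerov
    · funext i
      rw [hev (i.val + 2) (by omega), dif_neg (by omega), dif_neg (by omega)]
      exact congrArg t (Fin.ext (show i.val + 2 - 2 = i.val by omega))



lemma cnt_split (k : ℕ) :
    cnt (k+3) = lin (k+2) + lin k := by
  classical
  have h := Finset.card_filter_add_card_filter_not
    (s := okSet (k+3)) (p := fun f => f 0 = false)
  simp only [Bool.not_eq_false] at h
  rw [cnt_false, cnt_true] at h
  show (okSet (k+3)).card = (Finset.univ.filter (LinOk (j := k+2))).card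
    + (Finset.univ.filter (LinOk (j := k))).card
  omega

lemma lucas_fib : ∀ m : ℕ, lucas (m+1) = Nat.fib m + Nat.fib (m+2) := by
  intro m
  induction m using Nat.strong_induction_on with
  | _ m ih =>
    match m with
    | 0 => decide
    | 1 => decide
    | (k+2) =>
      have h1 := ih (k+1) (by omega)
      have h2 := ih k (by omega)
      have e1 : Nat.fib (k+2+2) = Nat.fib (k+2) + Nat.fib (k+2+1) := Nat.fib_add_two
      have e2 : Nat.fib (k+2) = Nat.fib k + Nat.fib (k+1) := Nat.fib_add_two
      have e3 : Nat.fib (k+2+1) = Nat.fib (k+1) + Nat.fib (k+1+1) := Nat.fib_add_two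
      rw [show k+1+2 = k+2+1 from by omega] at h1
      rw [show k+1+1 = k+2 from by omega] at h1
      rw [show k+1+1 = k+2 from by omega] at e3
      show lucas (k+2) + lucas (k+1) = Nat.fib (k+2) + Nat.fib (k+2+2)
      omega

lemma cnt_eq_lucas (m : ℕ) (hm : 1 ≤ m) : cnt m = lucas m := by
  match m with
  | 1 => decide
  | 2 => decide
  | (k+3) =>
    rw [cnt_split k, lin_eq_fib, lin_eq_fib,
      show lucas (k+3) = lucas (k+2+1) from rfl, lucas_fib (k+2)]
    show Nat.fib (k+4) + Nat.fib (k+2) = Nat.fib (k+2) + Nat.fib (k+4)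
    exact Nat.add_comm _ _

lemma sum_P_eq : ∀ n > 0, ∑ i ∈ n.divisors, ((P i : ℤ)) = ((lucas n : ℤ)) := by
  intro n hn
  haveI : NeZero n := ⟨hn.ne'⟩
  have h1 : (okSet n).card = ∑ d ∈ n.divisors, P d := cnt_eq_sum_P
  have h2 : cnt n = (okSet n).card := by
    obtain ⟨k, rfl⟩ := Nat.exists_eq_succ_of_ne_zero hn.ne'
    rfl
  rw [← cnt_eq_lucas n hn, h2, h1]
  push_cast
  ring

lemma main_eq (n : ℕ) (hn : 1 ≤ n) :
    ∑ d ∈ n.divisors, (ArithmeticFunction.moebius (n / d) : ℤ) * (lucas d : ℤ) = (P n : ℤ) := by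
  have := (ArithmeticFunction.sum_eq_iff_sum_smul_moebius_eq
    (f := fun i => ((P i : ℤ))) (g := fun i => ((lucas i : ℤ)))).1 sum_P_eq n hn
  simp only [zsmul_eq_mul] at this
  rw [← this, ← Nat.sum_divisorsAntidiagonal' (f := fun a b =>
    ((ArithmeticFunction.moebius a : ℤ)) * ((lucas b : ℤ))) (n := n)]
  simp [Int.cast_id]

end LucasAux

theorem lucas_moebius_sum (n : ℕ) (hn : 1 ≤ n) :
    0 ≤ ∑ d ∈ n.divisors, (ArithmeticFunction.moebius (n / d) : ℤ) * (lucas d : ℤ) ∧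
    (n : ℤ) ∣ ∑ d ∈ n.divisors, (ArithmeticFunction.moebius (n / d) : ℤ) * (lucas d : ℤ) := by
  rw [LucasAux.main_eq n hn]
  haveI : NeZero n := ⟨by omega⟩
  exact ⟨Int.natCast_nonneg _, Int.natCast_dvd_natCast.2 LucasAux.m_dvd_P⟩
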